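/- Let A ∈ T_{m,n}, let μ̄ ∈ (0,1), and let ξ, ζ, η ∈ ℝⁿ be nonnegative vectors with eᵀξ = 1 satisfying: ξᵢηᵢ = 0 for all i, (1−μ̄)ξᵢζᵢ = 0 for all i, ζ = (1−μ̄)·A ξ^{m−1}, and (1−μ̄)[ξᵀζ − ξᵀη + (m−1)(Â ξ^{m−1})ᵀξ] + μ̄·ξᵀξ = 0. Then a contradiction follows; i.e., no such ξ, ζ, η exist. -/

import Mathlib

/-- `(A x^{m-1})_i`. -/
noncomputable def tvec {n mm : ℕ} (A : Fin n → (Fin mm → Fin n) → ℝ)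
    (x : Fin n → ℝ) (i : Fin n) : ℝ :=
  ∑ j : Fin mm → Fin n, A i j * ∏ k, x (j k)

/-- Partial symmetrization in the last `m − 1` indices. -/
noncomputable def psym {n mm : ℕ} (A : Fin n → (Fin mm → Fin n) → ℝ) :
    Fin n → (Fin mm → Fin n) → ℝ :=
  fun i j => (1 / (Nat.factorial mm : ℝ)) * ∑ π : Equiv.Perm (Fin mm), A i (j ∘ π)

lemma tvec_psym {n mm : ℕ} (A : Fin n → (Fin mm → Fin n) → ℝ)
    (x : Fin n → ℝ) (i : Fin n) : tvec (psym A) x i = tvec A x i := by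
  have key : ∀ π : Equiv.Perm (Fin mm),
      ∑ j : Fin mm → Fin n, A i (j ∘ π) * ∏ k, x (j k)
        = ∑ j : Fin mm → Fin n, A i j * ∏ k, x (j k) := by
    intro π
    apply Fintype.sum_equiv (Equiv.arrowCongr π.symm (Equiv.refl (Fin n)))
    intro j
    have hprod : ∏ k, x (j (π k)) = ∏ k, x (j k) :=
      Equiv.prod_comp π fun k => x (j k)
    simp [Equiv.arrowCongr, Function.comp, hprod]
  simp only [tvec, psym]
  calc ∑ j : Fin mm → Fin n,
        ((1 / (Nat.factorial mm : ℝ)) * ∑ π : Equiv.Perm (Fin mm), A i (j ∘ π)) * ∏ k, x (j k)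
      = (1 / (Nat.factorial mm : ℝ)) *
          ∑ π : Equiv.Perm (Fin mm), ∑ j : Fin mm → Fin n, A i (j ∘ π) * ∏ k, x (j k) := by
        simp only [mul_assoc, Finset.sum_mul]
        rw [← Finset.mul_sum, Finset.sum_comm]
    _ = (1 / (Nat.factorial mm : ℝ)) * ∑ _π : Equiv.Perm (Fin mm),
          ∑ j : Fin mm → Fin n, A i j * ∏ k, x (j k) := by
        congr 1; exact Finset.sum_congr rfl fun π _ => key π
    _ = ∑ j : Fin mm → Fin n, A i j * ∏ k, x (j k) := by
        rw [Finset.sum_const, Finset.card_univ, Fintype.card_perm, Fintype.card_fin, nsmul_eq_mul]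
        have : (Nat.factorial mm : ℝ) ≠ 0 := Nat.cast_ne_zero.mpr (Nat.factorial_ne_zero mm)
        field_simp

theorem no_limit_point_subcase_i {n mm : ℕ} (A : Fin n → (Fin (mm + 1) → Fin n) → ℝ)
    (μ : ℝ) (hμ : μ ∈ Set.Ioo (0 : ℝ) 1) (ξ ζ η : Fin n → ℝ)
    (hξ : ∀ i, 0 ≤ ξ i) (hζ : ∀ i, 0 ≤ ζ i) (hη : ∀ i, 0 ≤ η i)
    (hsum : ∑ i, ξ i = 1)
    (h2 : ∀ i, ξ i * η i = 0)
    (h3 : ∀ i, (1 - μ) * (ξ i * ζ i) = 0)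
    (h4 : ∀ i, ζ i = (1 - μ) * tvec A ξ i)
    (h1 : (1 - μ) * ((∑ i, ξ i * ζ i) - (∑ i, ξ i * η i)
        + ((mm : ℝ) + 1) * ∑ i, tvec (psym A) ξ i * ξ i) + μ * ∑ i, ξ i * ξ i = 0) :
    False := by
  obtain ⟨hμ0, hμ1⟩ := hμ
  have hne : (1 - μ) ≠ 0 := by linarith
  have hξζ : ∀ i, ξ i * ζ i = 0 := fun i => by
    have := h3 i; exact (mul_eq_zero.mp this).resolve_left hne
  have htv : ∀ i, tvec (psym A) ξ i * ξ i = 0 := by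
    intro i
    rw [tvec_psym]
    have : ξ i * ((1 - μ) * tvec A ξ i) = 0 := by rw [← h4 i]; exact hξζ i
    rcases mul_eq_zero.mp this with h | h
    · rw [h, mul_zero]
    · rcases mul_eq_zero.mp h with h' | h'
      · exact absurd h' hne
      · rw [h', zero_mul]
  have hs1 : (∑ i, ξ i * ζ i) = 0 := Finset.sum_eq_zero fun i _ => hξζ i
  have hs2 : (∑ i, ξ i * η i) = 0 := Finset.sum_eq_zero fun i _ => h2 i
  have hs3 : (∑ i, tvec (psym A) ξ i * ξ i) = 0 := Finset.sum_eq_zero fun i _ => htv i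
  rw [hs1, hs2, hs3] at h1
  simp only [mul_zero, sub_zero, add_zero, zero_add] at h1
  have hpos : 0 < ∑ i, ξ i * ξ i := by
    have h1' : (0:ℝ) < 1 := one_pos
    have : ∃ i, 0 < ξ i := by
      by_contra h
      push_neg at h
      have : (∑ i, ξ i) = 0 := Finset.sum_eq_zero fun i _ => le_antisymm (h i) (hξ i)
      rw [hsum] at this; linarith
    obtain ⟨i, hi⟩ := this
    have : 0 < ξ i * ξ i := mul_pos hi hi
    calc (0:ℝ) < ξ i * ξ i := this
      _ ≤ ∑ i, ξ i * ξ i := Finset.single_le_sum (fun j _ => mul_self_nonneg (ξ j)) (Finset.mem_univ i)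
  nlinarith [mul_pos hμ0 hpos]
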